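/- Let P(z) = ∏_{j=1}^n (z - z_j) where each z_j lies on the unit circle, z_j = e^{i t_j} with 0 ≤ t_1 < t_2 < ... < t_n < 2π, and set t_{n+1} = t_1 + 2π. Let m = min_{1 ≤ j ≤ n} max_{t ∈ [t_j, t_{j+1}]} |P(e^{it})|. Then for all z on the unit circle, |P'(z)|² ≥ (n/2)² (|P(z)|² + max(m² - |P(z)|², 0)), and in particular |P'(z)| ≥ nm/2. -/

import Mathlib

open Complex Real Set

open Polynomial



noncomputable def eI (a : ℝ) : ℂ := Complex.exp ((a : ℂ) * Complex.I)

lemma eI_add (a b : ℝ) : eI (a + b) = eI a * eI b := by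
  rw [eI, eI, eI, ← Complex.exp_add]; push_cast; ring_nf

lemma eI_ne_zero (a : ℝ) : eI a ≠ 0 := Complex.exp_ne_zero _

lemma eI_neg (a : ℝ) : eI (-a) = (eI a)⁻¹ := by
  rw [eI, eI, ← Complex.exp_neg]; push_cast; ring_nf

lemma abs_eI (a : ℝ) : ‖eI a‖ = 1 := Complex.norm_exp_ofReal_mul_I a

lemma eI_zero : eI 0 = 1 := by simp [eI]

lemma eI_pow (a : ℝ) (k : ℕ) : eI a ^ k = eI (k * a) := by
  rw [eI, eI, ← Complex.exp_nat_mul]; push_cast; ring_nf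

lemma cos_eI (a : ℝ) : (Real.cos a : ℂ) = (eI a + eI (-a)) / 2 := by
  rw [eI, eI, Complex.ofReal_cos, Complex.cos]
  push_cast; ring_nf

lemma sin_eI (a : ℝ) : (Real.sin a : ℂ) = (eI (-a) - eI a) * Complex.I / 2 := by
  rw [eI, eI, Complex.ofReal_sin, Complex.sin]
  push_cast; ring_nf

lemma exp_sub_exp (x y : ℝ) :
    eI x - eI y = 2 * Complex.I * (Real.sin ((x - y)/2) : ℝ) * eI ((x + y)/2) := by
  have h1 : x = (x+y)/2 + (x-y)/2 := by ring
  have h2 : y = (x+y)/2 + -((x-y)/2) := by ring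
  calc eI x - eI y = eI ((x+y)/2 + (x-y)/2) - eI ((x+y)/2 + -((x-y)/2)) := by
        rw [← h1, ← h2]
    _ = 2 * Complex.I * (Real.sin ((x - y)/2) : ℝ) * eI ((x + y)/2) := by
        rw [eI_add, eI_add, sin_eI]
        linear_combination (eI ((x+y)/2) * eI ((x-y)/2) -
          eI ((x+y)/2) * eI (-((x-y)/2))) * Complex.I_sq

lemma eI_eq_eI {a b : ℝ} (h : eI a = eI b) (hd : |a - b| < 2 * Real.pi) : a = b := by
  rw [eI, eI, Complex.exp_eq_exp_iff_exists_int] at h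
  obtain ⟨k, hk⟩ := h
  have hI : (Complex.I : ℂ) ≠ 0 := Complex.I_ne_zero
  have : (a : ℂ) = (b : ℝ) + k * (2 * Real.pi) := by
    have := mul_right_cancel₀ hI (by linear_combination hk :
      (a:ℂ) * Complex.I = ((b:ℝ) + k * (2*Real.pi)) * Complex.I)
    exact this
  have hr : a = b + k * (2 * Real.pi) := by exact_mod_cast this
  have hk0 : k = 0 := by
    by_contra hne
    have h1 : (1 : ℝ) ≤ |(k:ℝ)| := by
      have : (1:ℤ) ≤ |k| := Int.one_le_abs (by omega)
      exact_mod_cast this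
    have hpi : (0:ℝ) < 2 * Real.pi := by positivity
    have h2 : 2 * Real.pi ≤ |(k:ℝ)| * (2 * Real.pi) := le_mul_of_one_le_left (le_of_lt hpi) h1
    rw [hr] at hd
    simp only [add_sub_cancel_left] at hd
    rw [abs_mul, abs_of_pos hpi] at hd
    linarith
  rw [hr, hk0]; simp

lemma eI_sum {ι : Type*} (F : Finset ι) (f : ι → ℝ) :
    ∏ j ∈ F, eI (f j) = eI (∑ j ∈ F, f j) := by
  rw [eI, Complex.ofReal_sum, Finset.sum_mul, Complex.exp_sum]
  rfl

lemma prod_identity (n : ℕ) (t : ℕ → ℝ) (s : ℝ) :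
    ∏ j ∈ Finset.Icc 1 n, (eI s - eI (t j)) =
      (2*Complex.I)^n * eI ((n*s + ∑ j ∈ Finset.Icc 1 n, t j)/2) *
        ((∏ j ∈ Finset.Icc 1 n, Real.sin ((s - t j)/2) : ℝ) : ℂ) := by
  have hcard : (Finset.Icc 1 n).card = n := by rw [Nat.card_Icc]; omega
  calc ∏ j ∈ Finset.Icc 1 n, (eI s - eI (t j))
      = ∏ j ∈ Finset.Icc 1 n,
          (2 * Complex.I * (Real.sin ((s - t j)/2) : ℝ) * eI ((s + t j)/2)) :=
        Finset.prod_congr rfl (fun j _ => exp_sub_exp s (t j))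
    _ = (∏ _j ∈ Finset.Icc 1 n, (2*Complex.I)) *
          (∏ j ∈ Finset.Icc 1 n, ((Real.sin ((s - t j)/2) : ℝ) : ℂ)) *
          (∏ j ∈ Finset.Icc 1 n, eI ((s + t j)/2)) := by
        rw [← Finset.prod_mul_distrib, ← Finset.prod_mul_distrib]
    _ = (2*Complex.I)^n * eI ((n*s + ∑ j ∈ Finset.Icc 1 n, t j)/2) *
        ((∏ j ∈ Finset.Icc 1 n, Real.sin ((s - t j)/2) : ℝ) : ℂ) := by
        rw [Finset.prod_const, hcard, eI_sum, Complex.ofReal_prod]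
        have : ∑ j ∈ Finset.Icc 1 n, (s + t j)/2
            = (n*s + ∑ j ∈ Finset.Icc 1 n, t j)/2 := by
          rw [← Finset.sum_div]
          rw [Finset.sum_add_distrib, Finset.sum_const, hcard]
          ring_nf
        rw [this]; ring


lemma sign_lemma (n : ℕ) (hn : 1 ≤ n) (t : ℕ → ℝ) (h0 : 0 ≤ t 1)
    (hmono : StrictMonoOn t (Set.Icc 1 n)) (hlast : t n < 2 * Real.pi)
    (hwrap : t (n + 1) = t 1 + 2 * Real.pi)
    (j : ℕ) (hj1 : 1 ≤ j) (hjn : j ≤ n) (s : ℝ) (hs1 : t j < s) (hs2 : s < t (j+1)) :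
    0 < (-1:ℝ)^(n - j) * ∏ k ∈ Finset.Icc 1 n, Real.sin ((s - t k)/2) := by
  have hmo := hmono.monotoneOn
  have hpi := Real.pi_pos
  have hmem : ∀ k, 1 ≤ k → k ≤ n → t k ∈ Set.Icc (t 1) (t n) := by
    intro k h1 h2
    constructor
    · exact hmo (by simp [hn]) (by simp [h1, h2]) h1
    · exact hmo (by simp [h1, h2]) (by simp [hn]) h2
  have hpos : ∀ k, 1 ≤ k → k ≤ j → 0 < Real.sin ((s - t k)/2) := by
    intro k h1 h2
    have hk2 : k ≤ n := le_trans h2 hjn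
    have htk : t k ≤ t j := hmo (by simp [h1, hk2]) (by simp [hj1, hjn]) h2
    have hlow : 0 < (s - t k)/2 := by
      have : t k ≤ t j := htk
      linarith
    have hup : (s - t k)/2 < Real.pi := by
      have h1n := (hmem k h1 hk2).1
      have hupper : s < t 1 + 2 * Real.pi := by
        rcases eq_or_lt_of_le hjn with heq | hlt
        · subst heq; rw [hwrap] at hs2; exact hs2
        · have : t (j+1) ≤ t n := hmo (by simp; omega) (by simp [hn]) (by omega)
          nlinarith
      nlinarith
    exact Real.sin_pos_of_pos_of_lt_pi hlow hup
  have hneg : ∀ k, j+1 ≤ k → k ≤ n → Real.sin ((s - t k)/2) < 0 := by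
    intro k h1 h2
    have hj1n : j + 1 ≤ n := le_trans h1 h2
    have htk : t (j+1) ≤ t k := hmo (by simp; omega) (by simp; omega) h1
    have hup : (s - t k)/2 < 0 := by linarith
    have hlow : -Real.pi < (s - t k)/2 := by
      have h1k : t 1 ≤ t j := hmo (by simp [hn]) (by simp [hj1, hjn]) hj1
      have hkn : t k ≤ t n := hmo (by simp; omega) (by simp [hn]) h2
      nlinarith
    exact Real.sin_neg_of_neg_of_neg_pi_lt hup hlow
  have hsplit : (∏ k ∈ Finset.Ioc 0 j, Real.sin ((s - t k)/2)) *
      ∏ k ∈ Finset.Ioc j n, Real.sin ((s - t k)/2)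
      = ∏ k ∈ Finset.Icc 1 n, Real.sin ((s - t k)/2) := by
    rw [Finset.prod_Ioc_consecutive _ (Nat.zero_le j) hjn, ← Finset.Icc_add_one_left_eq_Ioc, zero_add]
  have h1 : 0 < ∏ k ∈ Finset.Ioc 0 j, Real.sin ((s - t k)/2) :=
    Finset.prod_pos (fun k hk => by
      simp only [Finset.mem_Ioc] at hk
      exact hpos k hk.1 hk.2)
  have hcard : (Finset.Ioc j n).card = n - j := Nat.card_Ioc j n
  have e1 : ∏ k ∈ Finset.Ioc j n, (-Real.sin ((s - t k)/2))
      = (-1:ℝ)^(n-j) * ∏ k ∈ Finset.Ioc j n, Real.sin ((s - t k)/2) := by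
    calc ∏ k ∈ Finset.Ioc j n, (-Real.sin ((s - t k)/2))
        = ∏ k ∈ Finset.Ioc j n, ((-1) * Real.sin ((s - t k)/2)) := by
          apply Finset.prod_congr rfl; intro k _; ring
      _ = (∏ _k ∈ Finset.Ioc j n, (-1:ℝ)) * ∏ k ∈ Finset.Ioc j n, Real.sin ((s - t k)/2) :=
          Finset.prod_mul_distrib
      _ = (-1:ℝ)^(n-j) * ∏ k ∈ Finset.Ioc j n, Real.sin ((s - t k)/2) := by
          rw [Finset.prod_const, hcard]
  have hsq : ((-1:ℝ)^(n-j)) * ((-1:ℝ)^(n-j)) = 1 := by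
    rw [← pow_add]
    exact Even.neg_one_pow ⟨n-j, rfl⟩
  have h3 : 0 < ∏ k ∈ Finset.Ioc j n, (-Real.sin ((s - t k)/2)) :=
    Finset.prod_pos (fun k hk => by
      simp only [Finset.mem_Ioc] at hk
      exact neg_pos.mpr (hneg k hk.1 hk.2))
  have h4 : (-1:ℝ)^(n-j) * ∏ k ∈ Finset.Ioc j n, Real.sin ((s - t k)/2)
      = ∏ k ∈ Finset.Ioc j n, (-Real.sin ((s - t k)/2)) := by
    rw [e1]
  calc (0:ℝ) < (∏ k ∈ Finset.Ioc 0 j, Real.sin ((s - t k)/2)) *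
        ∏ k ∈ Finset.Ioc j n, (-Real.sin ((s - t k)/2)) := mul_pos h1 h3
    _ = (-1:ℝ)^(n - j) * ∏ k ∈ Finset.Icc 1 n, Real.sin ((s - t k)/2) := by
        rw [← h4, ← hsplit]; ring

noncomputable def Pp (n : ℕ) (t : ℕ → ℝ) : Polynomial ℂ :=
  ∏ j ∈ Finset.Icc 1 n, (X - C (eI (t j)))

noncomputable def Gf (n : ℕ) (t : ℕ → ℝ) : ℝ → ℝ :=
  fun s => ∏ j ∈ Finset.Icc 1 n, Real.sin ((s - t j)/2)

lemma Pp_eval (n : ℕ) (t : ℕ → ℝ) (z : ℂ) :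
    (Pp n t).eval z = ∏ j ∈ Finset.Icc 1 n, (z - eI (t j)) := by
  simp [Pp, eval_prod]

lemma Gf_hasDeriv (n : ℕ) (t : ℕ → ℝ) (s : ℝ) :
    HasDerivAt (Gf n t) (deriv (Gf n t) s) s := by
  have h : HasDerivAt (fun s => ∏ j ∈ Finset.Icc 1 n, Real.sin ((s - t j)/2))
      (∑ j ∈ Finset.Icc 1 n, (∏ k ∈ (Finset.Icc 1 n).erase j, Real.sin ((s - t k)/2)) *
        (Real.cos ((s - t j)/2) * (1/2))) s := by
    apply HasDerivAt.fun_finsetProd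
    intro j _
    have h1 : HasDerivAt (fun s : ℝ => (s - t j)/2) (1/2) s := by
      simpa using ((hasDerivAt_id s).sub_const (t j)).div_const 2
    simpa using h1.sin
  exact h.differentiableAt.hasDerivAt

lemma poly_comp_hasDeriv (p : Polynomial ℂ) (s : ℝ) :
    HasDerivAt (fun y : ℝ => p.eval (eI y)) (p.derivative.eval (eI s) * (eI s * Complex.I)) s := by
  have h1 : HasDerivAt (fun z : ℂ => Complex.exp (z * Complex.I))
      (Complex.exp ((s:ℂ) * Complex.I) * Complex.I) (s:ℂ) :=
    (hasDerivAt_mul_const Complex.I).cexp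
  have h2 : HasDerivAt (fun z : ℂ => p.eval (Complex.exp (z * Complex.I)))
      (p.derivative.eval (eI s) * (eI s * Complex.I)) (s:ℂ) := by
    have := (p.hasDerivAt (eI s)).comp (s:ℂ) h1
    exact this
  exact h2.comp_ofReal

lemma deriv_identity (n : ℕ) (t : ℕ → ℝ) (s : ℝ) :
    Complex.I * eI s * (Pp n t).derivative.eval (eI s)
      = (2*Complex.I)^n * eI ((n*s + ∑ j ∈ Finset.Icc 1 n, t j)/2) *
        ((((n:ℝ)/2 : ℝ) : ℂ) * Complex.I * ((Gf n t s : ℝ) : ℂ)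
          + ((deriv (Gf n t) s : ℝ) : ℂ)) := by
  set T := ∑ j ∈ Finset.Icc 1 n, t j with hT
  have hfeq : (fun y : ℝ => (Pp n t).eval (eI y))
      = fun y : ℝ => (2*Complex.I)^n * (eI ((n*y + T)/2) * ((Gf n t y : ℝ) : ℂ)) := by
    funext y
    rw [Pp_eval, prod_identity, mul_assoc]
    rfl
  have hF1 : HasDerivAt (fun y : ℝ => (Pp n t).eval (eI y))
      ((Pp n t).derivative.eval (eI s) * (eI s * Complex.I)) s := poly_comp_hasDeriv _ s
  have hu : HasDerivAt (fun y : ℝ => ((n:ℝ) * y + T)/2) ((n:ℝ)/2) s := by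
    simpa using (((hasDerivAt_id s).const_mul (n:ℝ)).add_const T).div_const 2
  have hexp : HasDerivAt (fun y : ℝ => eI (((n:ℝ) * y + T)/2))
      (eI (((n:ℝ) * s + T)/2) * ((((n:ℝ)/2 : ℝ):ℂ) * Complex.I)) s := by
    have := (hu.ofReal_comp.mul_const Complex.I).cexp
    simpa [eI] using this
  have hg : HasDerivAt (fun y : ℝ => ((Gf n t y : ℝ) : ℂ))
      (((deriv (Gf n t) s : ℝ) : ℂ)) s := (Gf_hasDeriv n t s).ofReal_comp
  have hF2 : HasDerivAt
      (fun y : ℝ => (2*Complex.I)^n * (eI (((n:ℝ)*y + T)/2) * ((Gf n t y : ℝ) : ℂ)))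
      ((2*Complex.I)^n * ((eI (((n:ℝ)*s + T)/2) * ((((n:ℝ)/2 : ℝ):ℂ) * Complex.I)) * ((Gf n t s : ℝ):ℂ)
        + eI (((n:ℝ)*s + T)/2) * (((deriv (Gf n t) s : ℝ) : ℂ)))) s :=
    (hexp.mul hg).const_mul _
  have hF1' : HasDerivAt
      (fun y : ℝ => (2*Complex.I)^n * (eI (((n:ℝ)*y + T)/2) * ((Gf n t y : ℝ) : ℂ)))
      ((Pp n t).derivative.eval (eI s) * (eI s * Complex.I)) s := by
    rw [← hfeq]; exact hF1
  have huniq := hF1'.unique hF2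
  linear_combination huniq

lemma normSq_eI (a : ℝ) : Complex.normSq (eI a) = 1 := by
  rw [← Complex.sq_norm, abs_eI]; norm_num

lemma absSq_identity (n : ℕ) (t : ℕ → ℝ) (s : ℝ) :
    (‖(Pp n t).derivative.eval (eI s)‖)^2
      = ((2:ℝ)^n)^2 * (((n:ℝ)/2)^2 * (Gf n t s)^2 + (deriv (Gf n t) s)^2) := by
  have L := deriv_identity n t s
  have hrw : ((((n:ℝ)/2 : ℝ) : ℂ) * Complex.I * ((Gf n t s : ℝ) : ℂ)
      + (((deriv (Gf n t) s : ℝ)) : ℂ))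
      = ((deriv (Gf n t) s : ℝ) : ℂ) + (((((n:ℝ)/2) * Gf n t s : ℝ)) : ℂ) * Complex.I := by
    push_cast; ring
  rw [hrw] at L
  have h1 := congrArg Complex.normSq L
  simp only [map_mul, map_pow, Complex.normSq_I, normSq_eI, mul_one, one_mul,
    Complex.normSq_add_mul_I] at h1
  have h2 : Complex.normSq 2 = 4 := by
    simp [Complex.normSq_apply]; norm_num
  rw [h2] at h1
  have h4 : (4:ℝ)^n = ((2:ℝ)^n)^2 := by
    rw [← pow_mul, mul_comm, pow_mul]; norm_num
  rw [Complex.sq_norm, h1, h4]; ring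

noncomputable def Wp (n : ℕ) (τ A B : ℝ) : Polynomial ℂ :=
  C (((A:ℂ) - B*Complex.I)/2 * eI (-(n*τ/2))) * X^n + C (((A:ℂ) + B*Complex.I)/2 * eI (n*τ/2))

noncomputable def wf (n : ℕ) (τ A B : ℝ) : ℝ → ℝ :=
  fun s => A * Real.cos ((n:ℝ)/2*(s - τ)) + B * Real.sin ((n:ℝ)/2*(s - τ))

lemma key_w (ν σ A B : ℝ) :
    ((A:ℂ) - B*Complex.I)/2 * eI (-ν) * (eI σ * eI σ) + ((A:ℂ) + B*Complex.I)/2 * eI ν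
      = eI σ * ((A * Real.cos (σ - ν) + B * Real.sin (σ - ν) : ℝ) : ℂ) := by
  push_cast [-Complex.ofReal_cos, -Complex.ofReal_sin]
  rw [cos_eI, sin_eI, show σ - ν = σ + (-ν) by ring, eI_add,
    show -(σ + -ν) = (-σ) + ν by ring, eI_add, eI_neg, eI_neg]
  have ha := eI_ne_zero σ
  have hb := eI_ne_zero ν
  field_simp
  ring_nf

lemma Wp_eval (n : ℕ) (τ A B : ℝ) (s : ℝ) :
    (Wp n τ A B).eval (eI s) = eI (n*s/2) * ((wf n τ A B s : ℝ) : ℂ) := by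
  have h1 : (Wp n τ A B).eval (eI s)
      = ((A:ℂ) - B*Complex.I)/2 * eI (-(n*τ/2)) * (eI (n*s/2) * eI (n*s/2))
        + ((A:ℂ) + B*Complex.I)/2 * eI (n*τ/2) := by
    simp only [Wp, eval_add, eval_mul, eval_C, eval_pow, eval_X]
    rw [eI_pow]
    have h2 : eI ((n:ℝ)*s) = eI (n*s/2) * eI (n*s/2) := by
      rw [← eI_add]; congr 1; ring
    rw [h2]
  rw [h1, key_w (n*τ/2) (n*s/2) A B]
  have : (n:ℝ)*s/2 - n*τ/2 = (n:ℝ)/2*(s - τ) := by ring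
  rw [this]
  rfl

lemma wf_hasDeriv (n : ℕ) (τ A B : ℝ) (s : ℝ) :
    HasDerivAt (wf n τ A B)
      ((n:ℝ)/2 * (-A * Real.sin ((n:ℝ)/2*(s - τ)) + B * Real.cos ((n:ℝ)/2*(s - τ)))) s := by
  have hin : HasDerivAt (fun s : ℝ => (n:ℝ)/2*(s - τ)) ((n:ℝ)/2) s := by
    simpa using ((hasDerivAt_id s).sub_const τ).const_mul ((n:ℝ)/2)
  have h1 := (hin.cos).const_mul A
  have h2 := (hin.sin).const_mul B
  have := h1.add h2
  exact this.congr_deriv (by ring)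

lemma wf_sq_le (n : ℕ) (τ A B : ℝ) (s : ℝ) : (wf n τ A B s)^2 ≤ A^2 + B^2 := by
  have h1 := Real.sin_sq_add_cos_sq ((n:ℝ)/2*(s - τ))
  have h2 := sq_nonneg (A * Real.sin ((n:ℝ)/2*(s - τ)) - B * Real.cos ((n:ℝ)/2*(s - τ)))
  simp only [wf]
  nlinarith

lemma wf_per (n : ℕ) (τ A B : ℝ) (s : ℝ) :
    wf n τ A B (s + 2*Real.pi) = (-1:ℝ)^n * wf n τ A B s := by
  simp only [wf]
  have harg : (n:ℝ)/2*(s + 2*Real.pi - τ) = (n:ℝ)/2*(s - τ) + n * Real.pi := by ring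
  rw [harg, Real.cos_add_nat_mul_pi, Real.sin_add_nat_mul_pi]
  ring


lemma count_roots_contra (n : ℕ) (hn : 1 ≤ n) (D : Polynomial ℂ) (hD0 : D ≠ 0)
    (hdeg : D.natDegree ≤ n) (z₀ : ℂ) (hz₀ : D.IsRoot z₀) (hz₀' : D.derivative.IsRoot z₀)
    (c : ℕ → ℂ) (hroots : ∀ j ∈ Finset.Icc 1 n, D.IsRoot (c j))
    (hinj : Set.InjOn c (Finset.Icc 1 n)) : False := by
  obtain ⟨Q1, hQ1⟩ := (dvd_iff_isRoot.mpr hz₀)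
  have hQ1root : Q1.IsRoot z₀ := by
    have hder : D.derivative = Q1 + (X - C z₀) * Q1.derivative := by
      rw [hQ1, derivative_mul, derivative_X_sub_C, one_mul]
    have := hz₀'
    rw [IsRoot, hder] at this
    simpa using this
  obtain ⟨Q, hQ⟩ := dvd_iff_isRoot.mpr hQ1root
  have hD : D = (X - C z₀)^2 * Q := by rw [hQ1, hQ]; ring
  have hQ0 : Q ≠ 0 := by
    rintro rfl
    rw [mul_zero] at hD
    exact hD0 hD
  have hdegQ : 2 + Q.natDegree = D.natDegree := by
    rw [hD, natDegree_mul (pow_ne_zero _ (X_sub_C_ne_zero z₀)) hQ0, natDegree_pow,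
      natDegree_X_sub_C]
  set F := (Finset.Icc 1 n).image c with hF
  have hcardF : F.card = n := by
    rw [hF, Finset.card_image_of_injOn hinj, Nat.card_Icc]; omega
  have hsub : F.erase z₀ ⊆ Q.roots.toFinset := by
    intro x hx
    obtain ⟨hxne, hxF⟩ := Finset.mem_erase.mp hx
    obtain ⟨j, hj, rfl⟩ := Finset.mem_image.mp hxF
    have hroot : D.eval (c j) = 0 := hroots j hj
    rw [hD, eval_mul, eval_pow, eval_sub, eval_X, eval_C] at hroot
    have h1 : c j - z₀ ≠ 0 := sub_ne_zero.mpr hxne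
    have h2 : Q.eval (c j) = 0 := by
      rcases mul_eq_zero.mp hroot with h | h
      · exact absurd h (pow_ne_zero _ h1)
      · exact h
    rw [Multiset.mem_toFinset, mem_roots hQ0]
    exact h2
  have h1 : n - 1 ≤ (F.erase z₀).card := by
    have := Finset.card_erase_le (s := F) (a := z₀)
    have h2 := Finset.pred_card_le_card_erase (s := F) (a := z₀)
    omega
  have h2 : (F.erase z₀).card ≤ Q.roots.toFinset.card := Finset.card_le_card hsub
  have h3 : Q.roots.toFinset.card ≤ Multiset.card Q.roots := Q.roots.toFinset_card_le
  have h4 : Multiset.card Q.roots ≤ Q.natDegree := Polynomial.card_roots' Q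
  omega

set_option maxHeartbeats 2000000 in
theorem khr_core (n : ℕ) (hn : 1 ≤ n) (t : ℕ → ℝ) (h0 : 0 ≤ t 1)
    (hmono : StrictMonoOn t (Set.Icc 1 n)) (hlast : t n < 2 * Real.pi)
    (hwrap : t (n + 1) = t 1 + 2 * Real.pi)
    (m : ℝ)
    (hm : m = (Finset.Icc 1 n).inf' (Finset.nonempty_Icc.mpr hn)
      (fun j => sSup ((fun s : ℝ => ‖(Pp n t).eval (Complex.exp ((s:ℂ) * Complex.I))‖) ''
        Set.Icc (t j) (t (j + 1))))) :
    ∀ τ : ℝ, ((n:ℝ)/2)^2 * m^2 ≤ (‖(Pp n t).derivative.eval (eI τ)‖)^2 := by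
  intro τ
  by_contra hcon
  push_neg at hcon
  set G : ℝ → ℝ := Gf n t with hGdef
  set G' : ℝ → ℝ := deriv (Gf n t) with hG'def
  have hnR : (0:ℝ) < n := by exact_mod_cast hn
  have h2n : (0:ℝ) < 2^n := by positivity
  have hpi := Real.pi_pos
  -- continuity
  have hcont : Continuous (fun s : ℝ => ‖(Pp n t).eval (eI s)‖) := by
    apply continuous_norm.comp
    exact (Pp n t).continuous_aeval.comp
      (Complex.continuous_exp.comp (Complex.continuous_ofReal.mul continuous_const))
  -- abs of eval
  have habs_eval : ∀ s : ℝ, ‖(Pp n t).eval (eI s)‖ = 2^n * |G s| := by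
    intro s
    rw [Pp_eval, prod_identity, norm_mul, norm_mul, norm_pow, norm_mul, Complex.norm_two,
      Complex.norm_I, abs_eI, Complex.norm_real]
    simp [hGdef, Gf, Finset.abs_prod]
  -- arcs
  have harc : ∀ j, 1 ≤ j → j ≤ n → t j < t (j+1) := by
    intro j h1 h2
    rcases eq_or_lt_of_le h2 with rfl | hlt
    · rw [hwrap]
      have : t 1 ≤ t j := hmono.monotoneOn (by simp [hn]) (by simp [h1, h2]) h1
      linarith
    · exact hmono (by simp [h1, h2]) (by simp; omega) (by omega)
  have htmem : ∀ j, 1 ≤ j → j ≤ n → 0 ≤ t j ∧ t j < 2*Real.pi := by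
    intro j h1 h2
    constructor
    · exact le_trans h0 (hmono.monotoneOn (by simp [hn]) (by simp [h1, h2]) h1)
    · exact lt_of_le_of_lt (hmono.monotoneOn (by simp [h1, h2]) (by simp [hn]) h2) hlast
  -- m nonneg
  have hbdd : ∀ j, 1 ≤ j → j ≤ n → BddAbove ((fun s : ℝ =>
      ‖(Pp n t).eval (eI s)‖) '' Set.Icc (t j) (t (j+1))) := by
    intro j h1 h2
    exact (isCompact_Icc.image hcont).bddAbove
  have hm0 : 0 ≤ m := by
    rw [hm]
    apply Finset.le_inf'
    intro j hj
    simp only [Finset.mem_Icc] at hj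
    have : ‖(Pp n t).eval (eI (t j))‖ ∈ (fun s : ℝ =>
        ‖(Pp n t).eval (eI s)‖) '' Set.Icc (t j) (t (j+1)) :=
      Set.mem_image_of_mem _ (Set.left_mem_Icc.mpr (le_of_lt (harc j hj.1 hj.2)))
    calc (0:ℝ) ≤ ‖(Pp n t).eval (eI (t j))‖ := norm_nonneg _
      _ ≤ _ := le_csSup (hbdd j hj.1 hj.2) this
  -- strict positivity of m
  have hmain : ((2:ℝ)^n)^2 * (((n:ℝ)/2)^2 * (G τ)^2 + (G' τ)^2) < ((n:ℝ)/2)^2 * m^2 := by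
    rw [← absSq_identity]; exact hcon
  have hmpos : 0 < m := by
    rcases eq_or_lt_of_le hm0 with rfl | h
    · exfalso; nlinarith [sq_nonneg (G τ), sq_nonneg (G' τ)]
    · exact h
  -- endpoint zeros
  have hzero : ∀ j, 1 ≤ j → j ≤ n + 1 → (Pp n t).eval (eI (t j)) = 0 := by
    intro j h1 h2
    rcases le_or_gt j n with h | h
    · rw [Pp_eval]
      exact Finset.prod_eq_zero (Finset.mem_Icc.mpr ⟨h1, h⟩) (sub_self _)
    · have hj : j = n + 1 := by omega
      subst hj
      have he : eI (t (n+1)) = eI (t 1) := by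
        rw [hwrap, eI_add]
        have : eI (2*Real.pi) = 1 := by
          rw [eI]; push_cast; exact Complex.exp_two_pi_mul_I
        rw [this, mul_one]
      rw [Pp_eval, ← Pp_eval n t, he, Pp_eval]
      exact Finset.prod_eq_zero (Finset.mem_Icc.mpr ⟨le_refl 1, hn⟩) (sub_self _)
  -- select max points
  have hsel : ∀ j : ℕ, ∃ s : ℝ, (1 ≤ j ∧ j ≤ n) →
      (t j < s ∧ s < t (j+1) ∧ m ≤ ‖(Pp n t).eval (eI s)‖) := by
    intro j
    by_cases hj : 1 ≤ j ∧ j ≤ n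
    · obtain ⟨h1, h2⟩ := hj
      have hne : (Set.Icc (t j) (t (j+1))).Nonempty :=
        Set.nonempty_Icc.mpr (le_of_lt (harc j h1 h2))
      obtain ⟨s, hsmem, hsmax⟩ := isCompact_Icc.exists_isMaxOn hne hcont.continuousOn
      have hsup : sSup ((fun s : ℝ => ‖(Pp n t).eval (eI s)‖) ''
          Set.Icc (t j) (t (j+1))) = ‖(Pp n t).eval (eI s)‖ := by
        apply IsGreatest.csSup_eq
        constructor
        · exact Set.mem_image_of_mem _ hsmem
        · rintro y ⟨x, hx, rfl⟩
          exact hsmax hx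
      have hle : m ≤ ‖(Pp n t).eval (eI s)‖ := by
        rw [← hsup, hm]
        exact Finset.inf'_le _ (Finset.mem_Icc.mpr ⟨h1, h2⟩)
      refine ⟨s, fun _ => ⟨?_, ?_, hle⟩⟩
      · rcases eq_or_lt_of_le hsmem.1 with heq | h
        · exfalso
          rw [← heq] at hle
          rw [hzero j h1 (by omega)] at hle
          simp at hle
          linarith
        · exact h
      · rcases eq_or_lt_of_le hsmem.2 with heq | h
        · exfalso
          rw [heq] at hle
          rw [hzero (j+1) (by omega) (by omega)] at hle
          simp at hle
          linarith
        · exact h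
    · exact ⟨0, fun h => absurd h hj⟩
  choose sP hsP using hsel
  -- setup of comparison function
  set A : ℝ := G τ with hA
  set B : ℝ := 2/(n:ℝ) * G' τ with hB
  have hG'B : G' τ = (n:ℝ)/2 * B := by
    rw [hB]; field_simp
  set m2 : ℝ := m / 2^n with hm2
  have hm2pos : 0 < m2 := by positivity
  have hm2m : m = 2^n * m2 := by rw [hm2]; field_simp
  have hμ : A^2 + B^2 < m2^2 := by
    rw [hG'B] at hmain
    rw [hm2m] at hmain
    have hq : (0:ℝ) < ((n:ℝ)/2)^2 * ((2:ℝ)^n)^2 := by positivity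
    have e1 : ((2:ℝ)^n)^2 * (((n:ℝ)/2)^2 * A^2 + (((n:ℝ)/2)*B)^2)
        = ((n:ℝ)/2)^2 * ((2:ℝ)^n)^2 * (A^2+B^2) := by ring
    have e2 : ((n:ℝ)/2)^2 * ((2:ℝ)^n*m2)^2 = ((n:ℝ)/2)^2 * ((2:ℝ)^n)^2 * m2^2 := by ring
    have h1 : ((n:ℝ)/2)^2 * ((2:ℝ)^n)^2 * (A^2+B^2)
        < ((n:ℝ)/2)^2 * ((2:ℝ)^n)^2 * m2^2 := by
      rw [← e1, ← e2]; linarith [hmain]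
    exact (mul_lt_mul_iff_right₀ hq).mp h1
  set w : ℝ → ℝ := wf n τ A B with hw
  have hwlt : ∀ s, |w s| < m2 := by
    intro s
    nlinarith [_root_.sq_abs (w s), wf_sq_le n τ A B s, hμ, hm2pos, abs_nonneg (w s)]
  have hGm : ∀ j, 1 ≤ j → j ≤ n → m2 ≤ |G (sP j)| := by
    intro j h1 h2
    have := (hsP j ⟨h1, h2⟩).2.2
    rw [habs_eval (sP j)] at this
    rw [hm2, div_le_iff₀ h2n]
    linarith
  have hsgn : ∀ j, 1 ≤ j → j ≤ n → 0 < (-1:ℝ)^(n-j) * G (sP j) := by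
    intro j h1 h2
    have := sign_lemma n hn t h0 hmono hlast hwrap j h1 h2 (sP j)
      (hsP j ⟨h1, h2⟩).1 (hsP j ⟨h1, h2⟩).2.1
    exact this
  set d : ℝ → ℝ := fun s => G s - w s with hd
  have hds : ∀ j, 1 ≤ j → j ≤ n → 0 < (-1:ℝ)^(n-j) * d (sP j) := by
    intro j h1 h2
    have hpos := hsgn j h1 h2
    have heq : (-1:ℝ)^(n-j) * G (sP j) = |G (sP j)| := by
      rw [← abs_of_pos hpos, abs_mul, _root_.abs_pow, abs_neg, abs_one, one_pow, one_mul]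
    have h3 : (-1:ℝ)^(n-j) * w (sP j) ≤ |w (sP j)| := by
      calc (-1:ℝ)^(n-j) * w (sP j) ≤ |(-1:ℝ)^(n-j) * w (sP j)| := le_abs_self _
        _ = |w (sP j)| := by rw [abs_mul, _root_.abs_pow, abs_neg, abs_one, one_pow, one_mul]
    have h4 := hGm j h1 h2
    have h5 := hwlt (sP j)
    have : (-1:ℝ)^(n-j) * d (sP j) = (-1:ℝ)^(n-j) * G (sP j) - (-1:ℝ)^(n-j) * w (sP j) := by
      simp only [hd]; ring
    rw [this, heq]
    linarith
  -- continuity of d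
  have hcontG : Continuous G := by
    apply continuous_finset_prod
    intro j _
    exact Real.continuous_sin.comp ((continuous_id.sub continuous_const).div_const 2)
  have hcontw : Continuous w := by
    show Continuous fun s => A * Real.cos ((n:ℝ)/2*(s - τ)) + B * Real.sin ((n:ℝ)/2*(s - τ))
    fun_prop
  have hcontd : Continuous d := hcontG.sub hcontw
  -- periodicity
  have hGper : ∀ s, G (s + 2*Real.pi) = (-1:ℝ)^n * G s := by
    intro s
    have hcard : (Finset.Icc 1 n).card = n := by rw [Nat.card_Icc]; omega
    calc G (s + 2*Real.pi) = ∏ k ∈ Finset.Icc 1 n, Real.sin ((s + 2*Real.pi - t k)/2) := rfl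
      _ = ∏ k ∈ Finset.Icc 1 n, ((-1) * Real.sin ((s - t k)/2)) := by
          apply Finset.prod_congr rfl
          intro k _
          rw [show (s + 2*Real.pi - t k)/2 = (s - t k)/2 + Real.pi by ring, Real.sin_add_pi]
          ring
      _ = (-1:ℝ)^n * G s := by
          rw [Finset.prod_mul_distrib, Finset.prod_const, hcard]; rfl
  have hdper : ∀ s, d (s + 2*Real.pi) = (-1:ℝ)^n * d s := by
    intro s
    simp only [hd, hGper s, hw, wf_per n τ A B s]
    ring
  -- points around the circle
  set σ : ℕ → ℝ := fun j => if j ≤ n then sP j else sP 1 + 2*Real.pi with hσ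
  have hσlt : ∀ j, 1 ≤ j → j ≤ n → σ j < σ (j+1) := by
    intro j h1 h2
    rcases eq_or_lt_of_le h2 with rfl | hlt
    · have e1 : σ j = sP j := if_pos h2
      have e2 : σ (j+1) = sP 1 + 2*Real.pi := if_neg (by omega)
      rw [e1, e2]
      have h3 := (hsP j ⟨h1, le_refl j⟩).2.1
      rw [hwrap] at h3
      have h4 := (hsP 1 ⟨le_refl 1, hn⟩).1
      linarith
    · have e1 : σ j = sP j := if_pos h2
      have e2 : σ (j+1) = sP (j+1) := if_pos (by omega)
      rw [e1, e2]
      have h3 := (hsP j ⟨h1, h2⟩).2.1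
      have h4 := (hsP (j+1) ⟨by omega, by omega⟩).1
      linarith
  have hσmono : ∀ a b, 1 ≤ a → a ≤ b → b ≤ n+1 → σ a ≤ σ b := by
    intro a b ha hab hbn
    induction b, hab using Nat.le_induction with
    | base => exact le_refl _
    | succ k hk ih =>
      have h1 : σ a ≤ σ k := ih (by omega)
      have h2 : σ k < σ (k+1) := hσlt k (by omega) (by omega)
      linarith
  have halt : ∀ j, 1 ≤ j → j ≤ n →
      0 < (-1:ℝ)^(n-j) * d (σ j) ∧ (-1:ℝ)^(n-j) * d (σ (j+1)) < 0 := by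
    intro j h1 h2
    constructor
    · have e1 : σ j = sP j := if_pos h2
      rw [e1]; exact hds j h1 h2
    · rcases eq_or_lt_of_le h2 with heq | hlt
      · have e2 : σ (j+1) = sP 1 + 2*Real.pi := if_neg (by omega)
        rw [e2, heq, Nat.sub_self, pow_zero, one_mul, hdper (sP 1)]
        have h3 := hds 1 (le_refl 1) hn
        have hp : (-1:ℝ)^n = -(-1:ℝ)^(n-1) := by
          conv_lhs => rw [show n = (n-1)+1 by omega]
          rw [pow_succ]; ring
        rw [hp]
        linarith
      · have e2 : σ (j+1) = sP (j+1) := if_pos (by omega)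
        rw [e2]
        have h3 := hds (j+1) (by omega) (by omega)
        have hp : (-1:ℝ)^(n-j) = -(-1:ℝ)^(n-(j+1)) := by
          conv_lhs => rw [show n - j = (n-(j+1))+1 by omega]
          rw [pow_succ]; ring
        rw [hp]
        linarith
  -- IVT
  have hcz : ∀ j : ℕ, ∃ x : ℝ, (1 ≤ j ∧ j ≤ n) → (σ j < x ∧ x < σ (j+1) ∧ d x = 0) := by
    intro j
    by_cases hj : 1 ≤ j ∧ j ≤ n
    · obtain ⟨h1, h2⟩ := hj
      obtain ⟨hp, hq⟩ := halt j h1 h2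
      have hab : σ j ≤ σ (j+1) := le_of_lt (hσlt j h1 h2)
      rcases Nat.even_or_odd (n - j) with he | ho
      · rw [he.neg_one_pow, one_mul] at hp hq
        have hsub := intermediate_value_Ioo' hab hcontd.continuousOn
        have h0m : (0:ℝ) ∈ Set.Ioo (d (σ (j+1))) (d (σ j)) := ⟨hq, hp⟩
        obtain ⟨x, hx, hdx⟩ := hsub h0m
        exact ⟨x, fun _ => ⟨hx.1, hx.2, hdx⟩⟩
      · rw [ho.neg_one_pow] at hp hq
        have hp' : d (σ j) < 0 := by linarith
        have hq' : 0 < d (σ (j+1)) := by linarith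
        have hsub := intermediate_value_Ioo hab hcontd.continuousOn
        obtain ⟨x, hx, hdx⟩ := hsub ⟨hp', hq'⟩
        exact ⟨x, fun _ => ⟨hx.1, hx.2, hdx⟩⟩
    · exact ⟨0, fun h => absurd h hj⟩
  choose c hc using hcz
  -- c j are distinct on the circle
  have hcb : ∀ j, 1 ≤ j → j ≤ n → sP 1 ≤ σ j ∧ σ (j+1) ≤ sP 1 + 2*Real.pi := by
    intro j h1 h2
    constructor
    · have := hσmono 1 j (le_refl 1) h1 (by omega)
      have e1 : σ 1 = sP 1 := if_pos hn
      linarith [this, e1.symm.le]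
    · have := hσmono (j+1) (n+1) (by omega) (by omega) (le_refl _)
      have e1 : σ (n+1) = sP 1 + 2*Real.pi := if_neg (by omega)
      linarith [this, e1.le]
  have hinj : Set.InjOn (fun j => eI (c j)) (Finset.Icc 1 n) := by
    intro i hi j hj heq
    simp only [Finset.coe_Icc, Set.mem_Icc] at hi hj
    by_contra hne
    have key : ∀ a b, 1 ≤ a → a ≤ n → 1 ≤ b → b ≤ n → a < b → eI (c a) = eI (c b) → False := by
      intro a b ha1 ha2 hb1 hb2 hab heqab
      have h1 := (hc a ⟨ha1, ha2⟩)
      have h2 := (hc b ⟨hb1, hb2⟩)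
      have hlt2 : c a < c b := by
        have : σ (a+1) ≤ σ b := hσmono (a+1) b (by omega) (by omega) (by omega)
        linarith [h1.2.1, h2.1]
      have hbnd1 := hcb a ha1 ha2
      have hbnd2 := hcb b hb1 hb2
      have hdist : |c a - c b| < 2*Real.pi := by
        rw [abs_sub_lt_iff]
        constructor
        · linarith [h1.1, h1.2.1, h2.1, h2.2.1, hbnd1.1, hbnd1.2, hbnd2.1, hbnd2.2]
        · linarith [h1.1, h1.2.1, h2.1, h2.2.1, hbnd1.1, hbnd1.2, hbnd2.1, hbnd2.2]
      have : c a = c b := by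
        rcases lt_trichotomy a b with h | h | h
        · exact eI_eq_eI heqab hdist
        · omega
        · omega
      linarith
    rcases lt_trichotomy i j with h | h | h
    · exact key i j hi.1 hi.2 hj.1 hj.2 h heq
    · exact hne h
    · exact key j i hj.1 hj.2 hi.1 hi.2 h heq.symm
  -- polynomial setup
  set T : ℝ := ∑ j ∈ Finset.Icc 1 n, t j with hT
  set u0 : ℂ := ((2*Complex.I)^n)⁻¹ * eI (-(T/2)) with hu0
  set D : Polynomial ℂ := C u0 * Pp n t - Wp n τ A B with hD
  have h2I : (2*Complex.I)^n ≠ 0 := pow_ne_zero _ (mul_ne_zero two_ne_zero Complex.I_ne_zero)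
  have hE : ∀ s : ℝ, (C u0 * Pp n t).eval (eI s) = eI ((n:ℝ)*s/2) * ((G s : ℝ) : ℂ) := by
    intro s
    rw [eval_mul, eval_C, Pp_eval, prod_identity, hu0]
    have e1 : eI (-(T/2)) * eI (((n:ℝ)*s + T)/2) = eI ((n:ℝ)*s/2) := by
      rw [← eI_add]; congr 1; ring
    calc ((2*Complex.I)^n)⁻¹ * eI (-(T/2)) *
          ((2*Complex.I)^n * eI (((n:ℝ)*s + T)/2) * ((G s : ℝ) : ℂ))
        = (((2*Complex.I)^n)⁻¹ * (2*Complex.I)^n) *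
            (eI (-(T/2)) * eI (((n:ℝ)*s + T)/2)) * ((G s : ℝ) : ℂ) := by ring
      _ = eI ((n:ℝ)*s/2) * ((G s : ℝ) : ℂ) := by
          rw [inv_mul_cancel₀ h2I, e1, one_mul]
  have hDeval : ∀ s : ℝ, D.eval (eI s) = eI ((n:ℝ)*s/2) * ((d s : ℝ) : ℂ) := by
    intro s
    rw [hD, eval_sub, hE, Wp_eval]
    have : ((d s : ℝ) : ℂ) = ((G s : ℝ) : ℂ) - ((wf n τ A B s : ℝ) : ℂ) := by
      simp only [hd]; push_cast; rfl
    rw [this]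
    ring
  have hdτ : d τ = 0 := by
    simp only [hd, hw, wf, hA, sub_self, mul_zero, Real.cos_zero, Real.sin_zero]
    ring
  have hD0 : D ≠ 0 := by
    intro hDz
    have h1 := hds 1 (le_refl 1) hn
    have h2 := hDeval (sP 1)
    rw [hDz] at h2
    simp only [eval_zero] at h2
    have h3 : ((d (sP 1) : ℝ) : ℂ) = 0 := by
      have := h2.symm
      rcases mul_eq_zero.mp this with h | h
      · exact absurd h (eI_ne_zero _)
      · exact h
    have h4 : d (sP 1) = 0 := by exact_mod_cast h3
    rw [h4] at h1
    simp at h1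
  have hdeg : D.natDegree ≤ n := by
    have hPpdeg : (Pp n t).natDegree ≤ n := by
      refine le_trans (natDegree_prod_le _ _) ?_
      have : ∀ j ∈ Finset.Icc 1 n, (X - C (eI (t j))).natDegree = 1 := by
        intro j _; exact natDegree_X_sub_C _
      rw [Finset.sum_congr rfl this, Finset.sum_const, Nat.card_Icc, smul_eq_mul, mul_one]
      omega
    have h1 : (C u0 * Pp n t).natDegree ≤ n := le_trans (natDegree_C_mul_le _ _) hPpdeg
    have h2 : (Wp n τ A B).natDegree ≤ n := by
      refine le_trans (natDegree_add_le _ _) (max_le ?_ ?_)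
      · refine le_trans (natDegree_C_mul_le _ _) ?_
        rw [natDegree_X_pow]
      · rw [natDegree_C]; omega
    exact le_trans (natDegree_sub_le _ _) (max_le h1 h2)
  have hz₀ : D.IsRoot (eI τ) := by
    rw [IsRoot, hDeval τ, hdτ]
    simp
  have hz₀' : D.derivative.IsRoot (eI τ) := by
    have hdzero : HasDerivAt d 0 τ := by
      have h1 := (Gf_hasDeriv n t τ).sub (wf_hasDeriv n τ A B τ)
      have e1 : deriv (Gf n t) τ - (n:ℝ)/2 *
          (-A * Real.sin ((n:ℝ)/2*(τ - τ)) + B * Real.cos ((n:ℝ)/2*(τ - τ))) = 0 := by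
        rw [sub_self, mul_zero, Real.sin_zero, Real.cos_zero]
        rw [show deriv (Gf n t) τ = G' τ from rfl, hG'B]
        ring
      rw [e1] at h1
      exact h1
    have h_in : HasDerivAt (fun s : ℝ => (n:ℝ)*s/2) ((n:ℝ)/2) τ := by
      simpa using ((hasDerivAt_id τ).const_mul (n:ℝ)).div_const 2
    have h_eI2 : HasDerivAt (fun s : ℝ => eI ((n:ℝ)*s/2))
        (eI ((n:ℝ)*τ/2) * ((((n:ℝ)/2 : ℝ):ℂ) * Complex.I)) τ := by
      have := (h_in.ofReal_comp.mul_const Complex.I).cexp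
      simpa [eI] using this
    have hF2 : HasDerivAt (fun s : ℝ => eI ((n:ℝ)*s/2) * ((d s : ℝ) : ℂ)) 0 τ := by
      have := h_eI2.mul hdzero.ofReal_comp
      have e2 : (eI ((n:ℝ)*τ/2) * ((((n:ℝ)/2 : ℝ):ℂ) * Complex.I)) * ((d τ : ℝ) : ℂ)
          + eI ((n:ℝ)*τ/2) * ((0:ℝ):ℂ) = 0 := by
        rw [hdτ]; push_cast; ring
      rw [e2] at this
      exact this
    have hF1 : HasDerivAt (fun s : ℝ => D.eval (eI s))
        (D.derivative.eval (eI τ) * (eI τ * Complex.I)) τ := poly_comp_hasDeriv D τ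
    have hfeq2 : (fun s : ℝ => D.eval (eI s)) = fun s : ℝ => eI ((n:ℝ)*s/2) * ((d s : ℝ) : ℂ) :=
      funext hDeval
    rw [hfeq2] at hF1
    have huniq := hF1.unique hF2
    have : D.derivative.eval (eI τ) = 0 := by
      rcases mul_eq_zero.mp huniq with h | h
      · exact h
      · exact absurd h (mul_ne_zero (eI_ne_zero τ) Complex.I_ne_zero)
    exact this
  have hroots : ∀ j ∈ Finset.Icc 1 n, D.IsRoot (eI (c j)) := by
    intro j hj
    simp only [Finset.mem_Icc] at hj
    rw [IsRoot, hDeval (c j), (hc j hj).2.2]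
    simp
  exact count_roots_contra n hn D hD0 hdeg (eI τ) hz₀ hz₀' (fun j => eI (c j)) hroots hinj

/-- Khrushchev's inverse Bernstein-type inequality. -/
theorem inverse_bernstein (n : ℕ) (hn : 1 ≤ n) (t : ℕ → ℝ)
    (h0 : 0 ≤ t 1) (hmono : StrictMonoOn t (Set.Icc 1 n)) (hlast : t n < 2 * Real.pi)
    (hwrap : t (n + 1) = t 1 + 2 * Real.pi)
    (P : ℂ → ℂ)
    (hP : P = fun z => ∏ j ∈ Finset.Icc 1 n, (z - Complex.exp (t j * Complex.I)))
    (m : ℝ)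
    (hm : m = (Finset.Icc 1 n).inf' (Finset.nonempty_Icc.mpr hn)
      (fun j => sSup ((fun s : ℝ => ‖P (Complex.exp (s * Complex.I))‖) ''
        Set.Icc (t j) (t (j + 1))))) :
    ∀ z : ℂ, ‖z‖ = 1 →
      ((n : ℝ) / 2) ^ 2 * (‖P z‖ ^ 2 + max (m ^ 2 - ‖P z‖ ^ 2) 0)
          ≤ ‖deriv P z‖ ^ 2 ∧
      (n : ℝ) * m / 2 ≤ ‖deriv P z‖ := by
  have hPeq : P = fun w => (Pp n t).eval w := by
    rw [hP]
    funext w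
    exact (Pp_eval n t w).symm
  have hm' : m = (Finset.Icc 1 n).inf' (Finset.nonempty_Icc.mpr hn)
      (fun j => sSup ((fun s : ℝ => ‖(Pp n t).eval (Complex.exp ((s:ℂ) * Complex.I))‖) ''
        Set.Icc (t j) (t (j + 1)))) := by
    rw [hm, hPeq]
  have hderiv : ∀ w : ℂ, deriv P w = (Pp n t).derivative.eval w := by
    intro w
    rw [hPeq]
    exact Polynomial.deriv _
  -- m ≥ 0
  have hnR : (0:ℝ) < n := by exact_mod_cast hn
  have h2n : (0:ℝ) < 2^n := by positivity
  have hcont : Continuous (fun s : ℝ => ‖(Pp n t).eval (eI s)‖) := by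
    apply continuous_norm.comp
    exact (Pp n t).continuous_aeval.comp
      (Complex.continuous_exp.comp (Complex.continuous_ofReal.mul continuous_const))
  have harc : ∀ j, 1 ≤ j → j ≤ n → t j < t (j+1) := by
    intro j h1 h2
    rcases eq_or_lt_of_le h2 with heq | hlt
    · rw [heq, hwrap]
      have : t 1 ≤ t j := hmono.monotoneOn (by simp [hn]) (by simp [h1, h2]) h1
      have := Real.pi_pos
      linarith
    · exact hmono (by simp [h1, h2]) (by simp; omega) (by omega)
  have hm0 : 0 ≤ m := by
    rw [hm']
    apply Finset.le_inf'
    intro j hj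
    simp only [Finset.mem_Icc] at hj
    have hmem : ‖(Pp n t).eval (eI (t j))‖ ∈ (fun s : ℝ =>
        ‖(Pp n t).eval (eI s)‖) '' Set.Icc (t j) (t (j+1)) :=
      Set.mem_image_of_mem _ (Set.left_mem_Icc.mpr (le_of_lt (harc j hj.1 hj.2)))
    calc (0:ℝ) ≤ ‖(Pp n t).eval (eI (t j))‖ := norm_nonneg _
      _ ≤ _ := le_csSup (isCompact_Icc.image hcont).bddAbove hmem
  -- main
  intro z hz
  have hzz : eI (Complex.arg z) = z := by
    have := Complex.norm_mul_exp_arg_mul_I z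
    rw [hz] at this
    simpa [eI] using this
  set s : ℝ := Complex.arg z with hs
  have hcore : ((n:ℝ)/2)^2 * m^2 ≤ (‖deriv P z‖)^2 := by
    have := khr_core n hn t h0 hmono hlast hwrap m hm' s
    rw [hzz] at this
    rw [hderiv z]
    exact this
  have habs2 : (‖deriv P z‖)^2
      = ((2:ℝ)^n)^2 * (((n:ℝ)/2)^2 * (Gf n t s)^2 + (deriv (Gf n t) s)^2) := by
    rw [hderiv z, ← hzz]
    exact absSq_identity n t s
  have hRz : ‖P z‖ = 2^n * |Gf n t s| := by
    rw [hPeq, ← hzz]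
    show ‖(Pp n t).eval (eI s)‖ = 2^n * |Gf n t s|
    rw [Pp_eval, prod_identity, norm_mul, norm_mul, norm_pow, norm_mul, Complex.norm_two,
      Complex.norm_I, abs_eI, Complex.norm_real]
    simp [Gf, Finset.abs_prod]
  have htriv : ((n:ℝ)/2)^2 * (‖P z‖)^2 ≤ (‖deriv P z‖)^2 := by
    rw [hRz, habs2]
    have e1 : (|Gf n t s|)^2 = (Gf n t s)^2 := _root_.sq_abs _
    have e2 : ((n:ℝ)/2)^2 * ((2:ℝ)^n * |Gf n t s|)^2
        = ((2:ℝ)^n)^2 * (((n:ℝ)/2)^2 * (Gf n t s)^2) := by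
      rw [mul_pow, e1]; ring
    nlinarith [e2, mul_nonneg (sq_nonneg ((2:ℝ)^n)) (sq_nonneg (deriv (Gf n t) s))]
  constructor
  · rcases le_or_gt (m^2 - (‖P z‖)^2) 0 with h | h
    · rw [max_eq_right h, add_zero]
      exact htriv
    · rw [max_eq_left (le_of_lt h)]
      have e : (‖P z‖)^2 + (m^2 - (‖P z‖)^2) = m^2 := by ring
      rw [e]
      exact hcore
  · have hq : ((n:ℝ)*m/2)^2 ≤ (‖deriv P z‖)^2 := by
      calc ((n:ℝ)*m/2)^2 = ((n:ℝ)/2)^2 * m^2 := by ring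
        _ ≤ _ := hcore
    nlinarith [norm_nonneg (deriv P z), mul_nonneg (mul_nonneg hnR.le hm0) (by norm_num : (0:ℝ) ≤ 1/2)]
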